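/- The map D sending a faithful (n+1)-dimensional Z_2^n-representation τ = ρ_0 ρ_1 ⋯ ρ_n (with {ρ_1,...,ρ_n} a basis of Hom(Z_2^n,Z_2), ρ_0 = ρ_1+⋯+ρ_{p+1}, and dual basis {α_1,...,α_n}) to [α_1,...,α_{p+1}] ⊗ {α_{p+2},...,α_n} induces an F_2-linear isomorphism from the F_2-vector space spanned by all faithful (n+1)-dimensional Z_2^n-representations onto the F_2-vector space with basis {[α_1,...,α_{p+1}] ⊗ {α_{p+2},...,α_n} : {α_1,...,α_n} a basis of Z_2^n, 0 ≤ p ≤ n-1}. -/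

import Mathlib

open Finset

attribute [local instance] Classical.propDecidable

abbrev V (n : ℕ) : Type := Fin n → ZMod 2

def LinIndep {n : ℕ} (s : Finset (V n)) : Prop :=
  LinearIndependent (ZMod 2) (fun x : (s : Set (V n)) => (x : V n))

def IsSimplex (n p : ℕ) (σ : Finset (V n)) : Prop :=
  σ.card = p + 1 ∧ LinIndep σ

def shift {n : ℕ} (σ : Finset (V n)) (α : V n) : Finset (V n) :=
  σ.image (· + α)

def SimpRel {n : ℕ} (σ σ' : Finset (V n)) : Prop :=
  σ = σ' ∨ ∃ α : V n, σ ∩ σ' = {α} ∧ shift (σ \ {α}) α = σ' \ {α}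

/-- The element `[σ] ⊗ τ` of `D_p ⊗ C_q`, realized as the chain
`∑_{σ' ~ σ} (σ', τ)` on pairs of simplices. -/
noncomputable def pairClass {n : ℕ} (σ τ : Finset (V n)) :
    (Finset (V n) × Finset (V n)) →₀ ZMod 2 :=
  ∑ σ' ∈ Finset.univ.filter (fun σ' => SimpRel σ σ'), Finsupp.single (σ', τ) 1

/-- Monomials in `F_2[Hom(Z_2^n, Z_2)]`, viewed as multisets of linear functionals:
these model `Z_2^n`-representations. -/
abbrev Mon (n : ℕ) : Type := Multiset (Module.Dual (ZMod 2) (V n))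

/-- A faithful `(n+1)`-dimensional `Z_2^n`-representation: `n+1` nonzero
functionals which collectively span `Hom(Z_2^n, Z_2)`. -/
def Faithful (n : ℕ) (m : Mon n) : Prop :=
  Multiset.card m = n + 1 ∧ (0 : Module.Dual (ZMod 2) (V n)) ∉ m ∧
    Submodule.span (ZMod 2) {f : Module.Dual (ZMod 2) (V n) | f ∈ m} = ⊤

/-- The `F_2`-span of the (singletons of) faithful `(n+1)`-dimensional
representations, i.e. the subspace `F̄_{n+1}` of the representation algebra. -/
noncomputable def FSpan (n : ℕ) : Submodule (ZMod 2) (Mon n →₀ ZMod 2) :=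
  Submodule.span (ZMod 2)
    {x : Mon n →₀ ZMod 2 | ∃ m : Mon n, Faithful n m ∧ x = Finsupp.single m 1}

/-- The `F_2`-vector space `𝔅_{n-2}`, spanned by the faithful basis elements
`[α_1,...,α_{p+1}] ⊗ {α_{p+2},...,α_n}` with `{α_1,...,α_n}` a basis of `Z_2^n`. -/
noncomputable def BSpan (n : ℕ) :
    Submodule (ZMod 2) ((Finset (V n) × Finset (V n)) →₀ ZMod 2) :=
  Submodule.span (ZMod 2)
    {y | ∃ s σ : Finset (V n), LinIndep s ∧ s.card = n ∧ σ ⊆ s ∧ σ.Nonempty ∧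
      y = pairClass σ (s \ σ)}


section helpers

lemma z2 (a : ZMod 2) : a = 0 ∨ a = 1 := by revert a; decide

lemma z2' {a : ZMod 2} (h : a ≠ 0) : a = 1 := (z2 a).resolve_left h

lemma addself {M : Type*} [AddCommGroup M] [Module (ZMod 2) M] (x : M) : x + x = 0 := by
  have : x + x = ((1 : ZMod 2) + 1) • x := by rw [add_smul, one_smul]
  rw [this, show (1 : ZMod 2) + 1 = 0 by decide, zero_smul]

lemma add_right_cancel2 {M : Type*} [AddCommGroup M] [Module (ZMod 2) M] {x y z : M}
    (h : x = y + z) : y = x + z := by rw [h, add_assoc, addself, add_zero]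

lemma nsmul2 {M : Type*} [AddCommGroup M] [Module (ZMod 2) M] (k : ℕ) (x : M) :
    k • x = ((k : ZMod 2)) • x := (Nat.cast_smul_eq_nsmul (ZMod 2) k x).symm

lemma linIndep_iff {n : ℕ} (s : Finset (V n)) :
    LinIndep s ↔ ∀ A ⊆ s, A.Nonempty → ∑ x ∈ A, x ≠ 0 := by
  constructor
  · intro h A hAs hne h0
    rw [LinIndep, Fintype.linearIndependent_iff] at h
    obtain ⟨a, ha⟩ := hne
    have := h (fun x => if (x : V n) ∈ A then 1 else 0) ?_ ⟨a, hAs ha⟩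
    · simp [ha] at this
    · have : ∑ i : (s : Set (V n)), (if (i : V n) ∈ A then (1 : ZMod 2) else 0) • (i : V n)
          = ∑ x ∈ s, (if x ∈ A then (1 : ZMod 2) else 0) • x :=
        Finset.sum_finset_coe (fun x => (if x ∈ A then (1 : ZMod 2) else 0) • x) s
      rw [this]
      have : ∑ x ∈ s, (if x ∈ A then (1 : ZMod 2) else 0) • x
          = ∑ x ∈ s.filter (· ∈ A), x := by
        rw [Finset.sum_filter]
        exact Finset.sum_congr rfl (fun x _ => by split <;> simp
          )
      rw [this, Finset.filter_mem_eq_inter, Finset.inter_eq_right.mpr hAs, h0]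
  · intro h
    rw [LinIndep, Fintype.linearIndependent_iff]
    intro g hg i
    by_contra hgi
    have hgi := z2' hgi
    set A : Finset (V n) := (Finset.univ.filter (fun j : (s : Set (V n)) => g j = 1)).map
      (Function.Embedding.subtype _) with hA
    have hsum : ∑ x ∈ A, x = ∑ j ∈ Finset.univ.filter (fun j : (s : Set (V n)) => g j = 1),
        (j : V n) := by rw [hA]; exact Finset.sum_map _ _ _
    have hsum2 : ∑ j ∈ Finset.univ.filter (fun j : (s : Set (V n)) => g j = 1), (j : V n)
        = ∑ j : (s : Set (V n)), g j • (j : V n) := by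
      rw [Finset.sum_filter]
      exact Finset.sum_congr rfl (fun x _ => by
        rcases z2 (g x) with h1 | h1 <;> simp [h1])
    have hAs : A ⊆ s := by
      intro x hx
      rw [hA, Finset.mem_map] at hx
      obtain ⟨j, _, rfl⟩ := hx
      exact j.2
    have hne : A.Nonempty := ⟨(i : V n), by
      rw [hA]
      exact Finset.mem_map_of_mem _ (Finset.mem_filter.mpr ⟨Finset.mem_univ i, hgi⟩)⟩
    exact h A hAs hne (by rw [hsum, hsum2, hg])

lemma LinIndep.zero_not_mem {n : ℕ} {s : Finset (V n)} (h : LinIndep s) : (0 : V n) ∉ s := by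
  intro h0
  exact (linIndep_iff s).mp h {0} (by simpa) ⟨0, by simp⟩ (by simp)

lemma LinIndep.add_not_mem {n : ℕ} {s : Finset (V n)} (h : LinIndep s) {a b : V n}
    (ha : a ∈ s) (hb : b ∈ s) (hab : a ≠ b) : a + b ∉ s := by
  intro hc
  set c := a + b with hcdef
  have hca : c ≠ a := by
    intro h'; apply h.zero_not_mem
    have : b = 0 := by
      have := add_right_cancel2 (x := c) (y := b) (z := a) (by rw [hcdef, add_comm])
      rw [this, h', addself]
    rwa [this] at hb
  have hcb : c ≠ b := by
    intro h'; apply h.zero_not_mem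
    have : a = 0 := by
      have := add_right_cancel2 (x := c) (y := a) (z := b) hcdef
      rw [this, h', addself]
    rwa [this] at ha
  have hsum : ∑ x ∈ ({a, b, c} : Finset (V n)), x = 0 := by
    rw [Finset.sum_insert (by simp [hab, hca.symm]), Finset.sum_insert (by simp [hcb.symm]),
      Finset.sum_singleton, ← add_assoc, ← hcdef, addself]
  exact (linIndep_iff s).mp h {a, b, c} (by
    intro x hx; simp at hx; rcases hx with rfl | rfl | rfl <;> assumption)
    ⟨a, by simp⟩ hsum

end helpers

section shiftlemmas

variable {n : ℕ}

lemma mem_shift {A : Finset (V n)} {a y : V n} : y ∈ shift A a ↔ y + a ∈ A := by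
  simp only [shift, Finset.mem_image]
  constructor
  · rintro ⟨x, hx, rfl⟩
    rwa [add_assoc, addself, add_zero]
  · intro h
    exact ⟨y + a, h, by rw [add_assoc, addself, add_zero]⟩

lemma shift_shift (A : Finset (V n)) (a b : V n) : shift (shift A a) b = shift A (a + b) := by
  ext y
  rw [mem_shift, mem_shift, mem_shift, add_assoc, add_comm b a]

lemma shift_zero (A : Finset (V n)) : shift A 0 = A := by
  ext y; rw [mem_shift, add_zero]

lemma shift_card (A : Finset (V n)) (a : V n) : (shift A a).card = A.card :=
  Finset.card_image_of_injective _ (fun x y h => by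
    have := congrArg (· + a) h
    simpa [add_assoc, addself] using this)

lemma shift_subset {A B : Finset (V n)} (h : A ⊆ B) (a : V n) : shift A a ⊆ shift B a :=
  Finset.image_subset_image h

lemma shift_sum (A : Finset (V n)) (a : V n) :
    ∑ x ∈ shift A a, x = (∑ x ∈ A, x) + (A.card : ZMod 2) • a := by
  rw [shift, Finset.sum_image (fun x _ y _ h => by
    have := congrArg (· + a) h
    simpa [add_assoc, addself] using this)]
  rw [Finset.sum_add_distrib, Finset.sum_const, nsmul2]

lemma image_shift {β : Type*} [DecidableEq β] (A : Finset (V n)) (t : V n) (f : V n → β) :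
    (shift A t).image f = A.image (fun x => f (x + t)) := by
  rw [shift, Finset.image_image]
  rfl

/-- translates of `insert 0 σ` minus `0` are linearly independent. -/
lemma shiftT_linIndep {σ : Finset (V n)} (h : LinIndep σ) {t : V n}
    (ht : t ∈ insert 0 σ) : LinIndep ((shift (insert 0 σ) t).erase 0) := by
  set T := insert 0 σ with hT
  have h0σ : (0 : V n) ∉ σ := h.zero_not_mem
  rw [linIndep_iff]
  intro A hA hne hsum0
  have hA0 : (0 : V n) ∉ A := fun h' => (Finset.mem_erase.mp (hA h')).1 rfl
  set A' := shift A t with hA'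
  have hA'T : A' ⊆ T := by
    have : A ⊆ shift T t := fun x hx => Finset.mem_of_mem_erase (hA hx)
    have := shift_subset this t
    rwa [shift_shift, addself, shift_zero] at this
  have htA' : t ∉ A' := by
    rw [hA', mem_shift, addself]
    exact hA0
  have hcard : A'.card = A.card := shift_card A t
  have hsum : ∑ x ∈ A', x = (∑ x ∈ A, x) + (A.card : ZMod 2) • t := by
    rw [hA', shift_sum]
  -- hence ∑_{A} x = ∑_{A'} x + (card) • t
  have hsum' : ∑ x ∈ A, x = (∑ x ∈ A', x) + (A.card : ZMod 2) • t := by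
    rw [hsum, add_assoc, ← add_smul, addself ((A.card : ZMod 2)), zero_smul, add_zero]
  set B := A'.erase 0 with hB
  have hBσ : B ⊆ σ := by
    intro x hx
    have hxA' : x ∈ A' := Finset.mem_of_mem_erase hx
    have : x ∈ T := hA'T hxA'
    rcases Finset.mem_insert.mp this with rfl | h'
    · exact absurd rfl (Finset.mem_erase.mp hx).1
    · exact h'
  have hsumB : ∑ x ∈ A', x = ∑ x ∈ B, x := by
    by_cases h0 : (0 : V n) ∈ A'
    · rw [hB]
      exact (Finset.sum_erase A' (by rfl)).symm
    · rw [hB, Finset.erase_eq_of_notMem h0]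
  have htB : t ∉ B := fun h' => htA' (Finset.mem_of_mem_erase h')
  rcases z2 ((A.card : ZMod 2)) with hc | hc
  · -- even: sum = ∑_B, B nonempty
    rw [hsum', hsumB, hc, zero_smul, add_zero] at hsum0
    have hAne : A.card ≠ 0 := fun h' => hne.ne_empty (Finset.card_eq_zero.mp h')
    have heven : (2 : ℕ) ∣ A.card := (ZMod.natCast_eq_zero_iff A.card 2).mp hc
    have hBcard : A'.card - 1 ≤ B.card := by rw [hB]; exact Finset.pred_card_le_card_erase
    have hBne : B.Nonempty := Finset.card_pos.mp (by omega)
    exact (linIndep_iff σ).mp h B hBσ hBne hsum0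
  · -- odd
    rw [hsum', hsumB, hc, one_smul] at hsum0
    rcases Finset.mem_insert.mp ht with rfl | htσ
    · -- t = 0 : ∑_B + 0 = ∑ B
      rw [add_zero] at hsum0
      have hBA : B = A := by rw [hB, hA', shift_zero, Finset.erase_eq_of_notMem hA0]
      exact (linIndep_iff σ).mp h B hBσ (hBA ▸ hne) hsum0
    · -- t ∈ σ: ∑_{insert t B} = 0
      have : ∑ x ∈ insert t B, x = 0 := by
        rw [Finset.sum_insert htB, add_comm, hsum0]
      exact (linIndep_iff σ).mp h (insert t B) (Finset.insert_subset htσ hBσ)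
        ⟨t, Finset.mem_insert_self t B⟩ this

end shiftlemmas

section nbhd

variable {n : ℕ}

/-- For `a ∈ σ`, the translate simplex. -/
lemma shiftT_erase {σ : Finset (V n)} (h : LinIndep σ) {a : V n} (ha : a ∈ σ) :
    (shift (insert 0 σ) a).erase 0 = insert a (shift (σ.erase a) a) := by
  have h0σ : (0 : V n) ∉ σ := h.zero_not_mem
  have ha0 : a ≠ 0 := fun h' => h0σ (h' ▸ ha)
  have h0X : (0 : V n) ∉ shift (σ.erase a) a := by
    rw [mem_shift, zero_add]
    exact fun h' => (Finset.mem_erase.mp h').1 rfl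
  have hTsplit : shift (insert 0 σ) a = insert a (insert 0 (shift (σ.erase a) a)) := by
    ext y
    rw [mem_shift, Finset.mem_insert, Finset.mem_insert, Finset.mem_insert, mem_shift,
      Finset.mem_erase]
    constructor
    · rintro (hy0 | hyσ)
      · left
        have := congrArg (· + a) hy0
        simpa [add_assoc, addself] using this
      · by_cases hy : y = 0
        · right; left; exact hy
        · right; right
          refine ⟨fun h' => hy ?_, hyσ⟩
          have := congrArg (· + a) h'
          simpa [add_assoc, addself] using this
    · rintro (rfl | rfl | ⟨h1, h2⟩)
      · left; exact addself _
      · right; rwa [zero_add]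
      · right; exact h2
  rw [hTsplit, Finset.erase_insert_of_ne ha0, Finset.erase_insert h0X]

lemma nbhd_eq {σ : Finset (V n)} (h : LinIndep σ) :
    Finset.univ.filter (fun σ' => SimpRel σ σ')
      = (insert 0 σ).image (fun t => (shift (insert 0 σ) t).erase 0) := by
  have h0σ : (0 : V n) ∉ σ := h.zero_not_mem
  ext σ'
  rw [Finset.mem_filter, Finset.mem_image]
  constructor
  · rintro ⟨-, (rfl | ⟨a, hinter, hshift⟩)⟩
    · exact ⟨0, Finset.mem_insert_self 0 σ, by
        rw [shift_zero, Finset.erase_insert h0σ]⟩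
    · have haσ : a ∈ σ := Finset.mem_inter.mp (hinter ▸ Finset.mem_singleton_self a) |>.1
      have haσ' : a ∈ σ' := Finset.mem_inter.mp (hinter ▸ Finset.mem_singleton_self a) |>.2
      refine ⟨a, Finset.mem_insert_of_mem haσ, ?_⟩
      rw [shiftT_erase h haσ]
      rw [Finset.sdiff_singleton_eq_erase, Finset.sdiff_singleton_eq_erase] at hshift
      rw [hshift, Finset.insert_erase haσ']
  · rintro ⟨t, ht, rfl⟩
    refine ⟨Finset.mem_univ _, ?_⟩
    rcases Finset.mem_insert.mp ht with rfl | haσ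
    · left; rw [shift_zero, Finset.erase_insert h0σ]
    · right
      refine ⟨t, ?_, ?_⟩
      · rw [shiftT_erase h haσ]
        ext x
        simp only [Finset.mem_inter, Finset.mem_singleton, Finset.mem_insert]
        constructor
        · rintro ⟨hxσ, (rfl | hxX)⟩
          · rfl
          · exfalso
            rw [mem_shift] at hxX
            have hy : x + t ∈ σ := (Finset.mem_erase.mp hxX).2
            have hx0 : x ≠ 0 := fun h' => h0σ (h' ▸ hxσ)
            have hyt : x + t ≠ t := fun h' => hx0 (by
              have := congrArg (· + t) h'
              simpa [add_assoc, addself] using this)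
            have hnot := h.add_not_mem hy haσ hyt
            rw [add_assoc, addself, add_zero] at hnot
            exact hnot hxσ
        · rintro rfl
          exact ⟨haσ, Or.inl rfl⟩
      · have htX : t ∉ shift (σ.erase t) t := by
          rw [mem_shift, addself]
          exact fun h' => h0σ (Finset.mem_of_mem_erase h')
        rw [Finset.sdiff_singleton_eq_erase, Finset.sdiff_singleton_eq_erase,
          shiftT_erase h haσ, Finset.erase_insert_eq_erase, Finset.erase_eq_of_notMem htX]

lemma nbhd_congr {σ σ₂ : Finset (V n)} (h : LinIndep σ) (h2 : SimpRel σ σ₂) :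
    Finset.univ.filter (fun σ' => SimpRel σ σ') = Finset.univ.filter (fun σ' => SimpRel σ₂ σ') := by
  have hmem : σ₂ ∈ Finset.univ.filter (fun σ' => SimpRel σ σ') :=
    Finset.mem_filter.mpr ⟨Finset.mem_univ _, h2⟩
  rw [nbhd_eq h] at hmem
  obtain ⟨t, ht, hσ₂⟩ := Finset.mem_image.mp hmem
  have h2li : LinIndep σ₂ := hσ₂ ▸ shiftT_linIndep h ht
  have h0T : (0 : V n) ∈ shift (insert 0 σ) t := by
    rw [mem_shift, zero_add]; exact ht
  have hins : insert 0 σ₂ = shift (insert 0 σ) t := by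
    rw [← hσ₂, Finset.insert_erase h0T]
  rw [nbhd_eq h, nbhd_eq h2li, hins, image_shift]
  refine (Finset.image_congr ?_).symm
  intro s hs
  dsimp only
  rw [shift_shift]
  congr 2
  show t + (s + t) = s
  rw [add_comm s t, ← add_assoc, addself, zero_add]

lemma pairClass_congr {σ σ₂ τ : Finset (V n)} (h : LinIndep σ) (h2 : SimpRel σ σ₂) :
    pairClass σ τ = pairClass σ₂ τ := by
  unfold pairClass
  rw [nbhd_congr h h2]

end nbhd

section dual

variable {n : ℕ} {ρ : Fin n → Module.Dual (ZMod 2) (V n)} {α : Fin n → V n}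

lemma dual_ext (hsp : Submodule.span (ZMod 2) (Set.range ρ) = ⊤) {v w : V n}
    (h : ∀ i, ρ i v = ρ i w) : v = w := by
  have hvw : ∀ f : Module.Dual (ZMod 2) (V n), f (v - w) = 0 := by
    intro f
    have hf : f ∈ Submodule.span (ZMod 2) (Set.range ρ) := by rw [hsp]; trivial
    induction hf using Submodule.span_induction with
    | mem f hf => obtain ⟨i, rfl⟩ := hf; rw [map_sub, h i, sub_self]
    | zero => rfl
    | add f g _ _ hf hg => rw [LinearMap.add_apply, hf, hg, add_zero]
    | smul c f _ hf => rw [LinearMap.smul_apply, hf, smul_zero]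
  have := (Module.forall_dual_apply_eq_zero_iff (ZMod 2) (v - w)).mp hvw
  rwa [sub_eq_zero] at this

lemma expand (hsp : Submodule.span (ZMod 2) (Set.range ρ) = ⊤)
    (hd : ∀ i j, ρ i (α j) = if i = j then 1 else 0) (v : V n) :
    v = ∑ i, ρ i v • α i := by
  apply dual_ext hsp
  intro k
  rw [map_sum]
  have : ∀ i, ρ k (ρ i v • α i) = ρ i v • (if k = i then 1 else 0) := by
    intro i; rw [map_smul, hd k i]
  rw [Finset.sum_congr rfl (fun i _ => this i)]
  rw [Finset.sum_eq_single k]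
  · rw [if_pos rfl, smul_eq_mul, mul_one]
  · intro i _ hik
    rw [if_neg (fun h => hik h.symm), smul_zero]
  · intro h'; exact absurd (Finset.mem_univ k) h'

lemma alpha_inj (hd : ∀ i j, ρ i (α j) = if i = j then 1 else 0) :
    Function.Injective α := by
  intro i j hij
  by_contra hne
  have h1 := hd i i
  have h2 := hd i j
  rw [hij] at h1
  rw [if_pos rfl] at h1
  rw [if_neg hne] at h2
  rw [h1] at h2
  exact one_ne_zero h2

lemma dual_ext' (hsp : Submodule.span (ZMod 2) (Set.range ρ) = ⊤)
    (hd : ∀ i j, ρ i (α j) = if i = j then 1 else 0)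
    {f g : Module.Dual (ZMod 2) (V n)} (h : ∀ j, f (α j) = g (α j)) : f = g := by
  refine LinearMap.ext fun v => ?_
  rw [expand hsp hd v, map_sum, map_sum]
  exact Finset.sum_congr rfl (fun i _ => by rw [map_smul, map_smul, h i])

lemma sum_apply_alpha (hd : ∀ i j, ρ i (α j) = if i = j then 1 else 0)
    (S : Finset (Fin n)) (j : Fin n) :
    (∑ i ∈ S, ρ i) (α j) = if j ∈ S then 1 else 0 := by
  rw [LinearMap.sum_apply]
  rw [Finset.sum_congr rfl (fun i _ => hd i j)]
  exact Finset.sum_ite_eq' S j (fun _ => 1)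

lemma imageLinIndep (hsp : Submodule.span (ZMod 2) (Set.range ρ) = ⊤)
    (hd : ∀ i j, ρ i (α j) = if i = j then 1 else 0) (S : Finset (Fin n)) :
    LinIndep (S.image α) := by
  rw [linIndep_iff]
  intro A hA hne h0
  set A' : Finset (Fin n) := Finset.univ.filter (fun i => α i ∈ A) with hA'
  have hAeq : A = A'.image α := by
    ext x
    simp only [hA', Finset.mem_image, Finset.mem_filter, Finset.mem_univ, true_and]
    constructor
    · intro hx
      obtain ⟨i, _, rfl⟩ := Finset.mem_image.mp (hA hx)
      exact ⟨i, hx, rfl⟩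
    · rintro ⟨i, hi, rfl⟩; exact hi
  obtain ⟨a, ha⟩ := hne
  obtain ⟨j₀, hj₀, rfl⟩ := Finset.mem_image.mp (hAeq ▸ ha)
  have hsum : ∑ x ∈ A, x = ∑ i ∈ A', α i := by
    rw [hAeq]
    exact Finset.sum_image (fun a _ b _ hab => alpha_inj hd hab)
  have : ρ j₀ (∑ x ∈ A, x) = 1 := by
    rw [hsum, map_sum, Finset.sum_congr rfl (fun i _ => hd j₀ i)]
    rw [Finset.sum_eq_single j₀]
    · rw [if_pos rfl]
    · intro i _ hij
      rw [if_neg (fun h => hij h.symm)]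
    · intro h'; exact absurd hj₀ h'
  rw [h0, map_zero] at this
  exact zero_ne_one this

/-- the count of `1` among the values of the basis functionals. -/
lemma cnt_eq_card (v : V n) (G : Finset (Fin n)) :
    Multiset.count (1 : ZMod 2) (Multiset.map (fun f => f v) (Multiset.map ρ G.val))
      = (G.filter (fun i => ρ i v = 1)).card := by
  rw [Multiset.map_map, Multiset.count_map]
  have h1 : Multiset.filter (fun a => (1:ZMod 2) = ((fun f => f v) ∘ ρ) a) G.val
      = (G.filter (fun i => ρ i v = 1)).val := by
    rw [Finset.filter_val]
    exact Multiset.filter_congr (fun x _ => by constructor <;> (intro h'; exact h'.symm))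
  rw [h1]
  rfl

lemma dualvec_iff (hsp : Submodule.span (ZMod 2) (Set.range ρ) = ⊤)
    (hd : ∀ i j, ρ i (α j) = if i = j then 1 else 0) (v : V n) :
    (Finset.univ.filter (fun i => ρ i v = 1)).card = 1 ↔ ∃ j, v = α j := by
  constructor
  · intro h
    obtain ⟨j, hj⟩ := Finset.card_eq_one.mp h
    refine ⟨j, ?_⟩
    have hmem : ∀ i, ρ i v = 1 ↔ i = j := by
      intro i
      constructor
      · intro hi
        have : i ∈ Finset.univ.filter (fun i => ρ i v = 1) :=
          Finset.mem_filter.mpr ⟨Finset.mem_univ i, hi⟩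
        rw [hj] at this
        exact Finset.mem_singleton.mp this
      · rintro rfl
        have h2 := Finset.mem_singleton_self i
        rw [← hj] at h2
        exact (Finset.mem_filter.mp h2).2
    rw [expand hsp hd v]
    rw [Finset.sum_eq_single j]
    · rw [(hmem j).mpr rfl, one_smul]
    · intro i _ hij
      have : ρ i v = 0 := by
        rcases z2 (ρ i v) with h' | h'
        · exact h'
        · exact absurd ((hmem i).mp h') hij
      rw [this, zero_smul]
    · intro h'; exact absurd (Finset.mem_univ j) h'
  · rintro ⟨j, rfl⟩
    have : Finset.univ.filter (fun i => ρ i (α j) = 1) = {j} := by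
      ext i
      simp only [Finset.mem_filter, Finset.mem_univ, true_and, Finset.mem_singleton, hd i j]
      constructor
      · intro h'
        by_contra hne
        rw [if_neg hne] at h'
        exact zero_ne_one h'
      · rintro rfl; rw [if_pos rfl]
    rw [this, Finset.card_singleton]

end dual

def Pres {n : ℕ} (m : Mon n) (ρ0 : Module.Dual (ZMod 2) (V n))
    (ρ : Fin n → Module.Dual (ZMod 2) (V n)) (α : Fin n → V n) (S : Finset (Fin n)) : Prop :=
  LinearIndependent (ZMod 2) ρ ∧ Submodule.span (ZMod 2) (Set.range ρ) = ⊤ ∧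
    (∀ i j, ρ i (α j) = if i = j then 1 else 0) ∧ S.Nonempty ∧ (ρ0 = ∑ i ∈ S, ρ i) ∧
    m = ρ0 ::ₘ Multiset.map ρ Finset.univ.val

section charac

variable {n : ℕ} {ρ : Fin n → Module.Dual (ZMod 2) (V n)} {α : Fin n → V n}

lemma D1 (hsp : Submodule.span (ZMod 2) (Set.range ρ) = ⊤)
    (hd : ∀ i j, ρ i (α j) = if i = j then 1 else 0) (S : Finset (Fin n)) :
    S.image α = Finset.univ.filter (fun v => (∑ i ∈ S, ρ i) v = 1 ∧
      Multiset.count 1 (Multiset.map (fun f => f v) (Multiset.map ρ Finset.univ.val)) = 1) := by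
  ext v
  rw [Finset.mem_filter, cnt_eq_card]
  constructor
  · intro hv
    obtain ⟨j, hj, rfl⟩ := Finset.mem_image.mp hv
    refine ⟨Finset.mem_univ _, ?_, ?_⟩
    · rw [sum_apply_alpha hd S j, if_pos hj]
    · exact (dualvec_iff hsp hd (α j)).mpr ⟨j, rfl⟩
  · rintro ⟨-, h1, h2⟩
    obtain ⟨j, rfl⟩ := (dualvec_iff hsp hd v).mp h2
    rw [sum_apply_alpha hd S j] at h1
    by_cases hj : j ∈ S
    · exact Finset.mem_image_of_mem α hj
    · rw [if_neg hj] at h1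
      exact absurd h1.symm one_ne_zero

lemma D2 (hsp : Submodule.span (ZMod 2) (Set.range ρ) = ⊤)
    (hd : ∀ i j, ρ i (α j) = if i = j then 1 else 0) (S : Finset (Fin n)) :
    Sᶜ.image α = Finset.univ.filter (fun v =>
      Multiset.count 1 (Multiset.map (fun f => f v)
        ((∑ i ∈ S, ρ i) ::ₘ Multiset.map ρ Finset.univ.val)) = 1) := by
  ext v
  rw [Finset.mem_filter, Multiset.map_cons, Multiset.count_cons, cnt_eq_card]
  constructor
  · intro hv
    obtain ⟨j, hj, rfl⟩ := Finset.mem_image.mp hv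
    have hjS : j ∉ S := Finset.mem_compl.mp hj
    refine ⟨Finset.mem_univ _, ?_⟩
    have hρ0 : (∑ i ∈ S, ρ i) (α j) = 0 := by rw [sum_apply_alpha hd S j, if_neg hjS]
    rw [hρ0, if_neg (by exact one_ne_zero)]
    rw [add_zero]
    exact (dualvec_iff hsp hd (α j)).mpr ⟨j, rfl⟩
  · rintro ⟨-, h1⟩
    rcases z2 ((∑ i ∈ S, ρ i) v) with h0 | h0
    · rw [h0, if_neg (by exact one_ne_zero), add_zero] at h1
      obtain ⟨j, rfl⟩ := (dualvec_iff hsp hd v).mp h1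
      rw [sum_apply_alpha hd S j] at h0
      have hjS : j ∉ S := by
        intro hj
        rw [if_pos hj] at h0
        exact one_ne_zero h0
      exact Finset.mem_image_of_mem α (Finset.mem_compl.mpr hjS)
    · exfalso
      rw [h0, if_pos rfl] at h1
      have hC : (Finset.univ.filter (fun i => ρ i v = 1)).card = 0 := by omega
      have hzero : ∀ i, ρ i v = 0 := by
        intro i
        rcases z2 (ρ i v) with h' | h'
        · exact h'
        · exfalso
          have : i ∈ Finset.univ.filter (fun i => ρ i v = 1) :=
            Finset.mem_filter.mpr ⟨Finset.mem_univ i, h'⟩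
          rw [Finset.card_eq_zero.mp hC] at this
          exact absurd this (Finset.notMem_empty i)
      have hv0 : v = 0 := by
        rw [expand hsp hd v]
        exact Finset.sum_eq_zero (fun i _ => by rw [hzero i, zero_smul])
      rw [hv0, map_zero] at h0
      exact one_ne_zero h0.symm

end charac

section wd

variable {n : ℕ}

lemma subsum_ne_zero {ρ' : Fin n → Module.Dual (ZMod 2) (V n)}
    (h : LinearIndependent (ZMod 2) ρ') {N : Mon n}
    (hN : N ≤ Multiset.map ρ' Finset.univ.val) (hne : N ≠ 0) : N.sum ≠ 0 := by
  have hinj : Function.Injective ρ' := h.injective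
  have hnodup : (Multiset.map ρ' Finset.univ.val).Nodup :=
    Finset.univ.nodup.map hinj
  have hNnodup : N.Nodup := Multiset.nodup_of_le hN hnodup
  set G : Finset (Fin n) := Finset.univ.filter (fun i => ρ' i ∈ N) with hG
  have hGN : N = Multiset.map ρ' G.val := by
    have hGnodup : (Multiset.map ρ' G.val).Nodup := G.nodup.map hinj
    rw [Multiset.Nodup.ext hNnodup hGnodup]
    intro f
    constructor
    · intro hf
      obtain ⟨i, hi, rfl⟩ := Multiset.mem_map.mp (Multiset.mem_of_le hN hf)
      refine Multiset.mem_map.mpr ⟨i, ?_, rfl⟩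
      show i ∈ G
      exact Finset.mem_filter.mpr ⟨Finset.mem_univ i, hf⟩
    · intro hf
      obtain ⟨i, hi, rfl⟩ := Multiset.mem_map.mp hf
      have : i ∈ G := hi
      exact (Finset.mem_filter.mp this).2
  intro h0
  have hsum : ∑ i ∈ G, ρ' i = 0 := by rw [← h0, hGN]; rfl
  have hGne : G.Nonempty := by
    rcases Multiset.exists_mem_of_ne_zero hne with ⟨f, hf⟩
    obtain ⟨i, hi, rfl⟩ := Multiset.mem_map.mp (Multiset.mem_of_le hN hf)
    exact ⟨i, Finset.mem_filter.mpr ⟨Finset.mem_univ i, hf⟩⟩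
  rw [Fintype.linearIndependent_iff] at h
  obtain ⟨i0, hi0⟩ := hGne
  have hz := h (fun i => if i ∈ G then 1 else 0) ?_ i0
  · rw [if_pos hi0] at hz; exact one_ne_zero hz
  · have hcg : ∀ i ∈ Finset.univ, (if i ∈ G then (1:ZMod 2) else 0) • ρ' i
        = if i ∈ G then ρ' i else 0 := by
      intro i _
      by_cases hiG : i ∈ G
      · rw [if_pos hiG, if_pos hiG, one_smul]
      · rw [if_neg hiG, if_neg hiG, zero_smul]
    rw [Finset.sum_congr rfl hcg, Finset.sum_ite_mem, Finset.univ_inter, hsum]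

theorem WD {m : Mon n} {ρ0 ρ0' : Module.Dual (ZMod 2) (V n)}
    {ρ ρ' : Fin n → Module.Dual (ZMod 2) (V n)} {α α' : Fin n → V n}
    {S S' : Finset (Fin n)} (h1 : Pres m ρ0 ρ α S) (h2 : Pres m ρ0' ρ' α' S') :
    pairClass (S.image α) (Sᶜ.image α) = pairClass (S'.image α') (S'ᶜ.image α') := by
  obtain ⟨hρ, hsp, hd, hSne, hρ0, hm⟩ := h1
  obtain ⟨hρ', hsp', hd', hSne', hρ0', hm'⟩ := h2
  -- τ equality
  have hτ : Sᶜ.image α = S'ᶜ.image α' := by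
    rw [D2 hsp hd S, D2 hsp' hd' S', ← hρ0, ← hρ0', ← hm, ← hm']
  rw [hτ]
  -- σ part
  by_cases hhead : ρ0' = ρ0
  · rw [hhead] at hm'
    have hcons : ρ0 ::ₘ Multiset.map ρ Finset.univ.val
        = ρ0 ::ₘ Multiset.map ρ' Finset.univ.val := by rw [← hm, ← hm']
    have hmap := (Multiset.cons_inj_right ρ0).mp hcons
    have hσ : S.image α = S'.image α' := by
      rw [D1 hsp hd S, D1 hsp' hd' S', ← hρ0, ← hρ0', hhead, hmap]
    rw [hσ]
  · -- heads differ
    have hρinj : Function.Injective ρ := hρ.injective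
    have hmem : ρ0' ∈ Multiset.map ρ Finset.univ.val := by
      have h' : ρ0' ∈ m := hm' ▸ Multiset.mem_cons_self ρ0' _
      rw [hm] at h'
      exact (Multiset.mem_cons.mp h').resolve_left hhead
    obtain ⟨j, hjF, hρj⟩ := Multiset.mem_map.mp hmem
    have hmap' : Multiset.map ρ' Finset.univ.val
        = ρ0 ::ₘ Multiset.map ρ ((Finset.univ.erase j).val) := by
      have e1 : m.erase ρ0' = Multiset.map ρ' Finset.univ.val := by
        rw [hm', Multiset.erase_cons_head]
      have e2 : m.erase ρ0' = ρ0 ::ₘ (Multiset.map ρ Finset.univ.val).erase ρ0' := by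
        rw [hm, Multiset.erase_cons_tail _ (Ne.symm hhead)]
      rw [← e1, e2, ← hρj, Finset.erase_val, Multiset.map_erase ρ hρinj j]
    have hjS : j ∈ S := by
      by_contra hjS
      have hle : (ρ0 ::ₘ Multiset.map ρ S.val) ≤ Multiset.map ρ' Finset.univ.val := by
        rw [hmap']
        refine Multiset.cons_le_cons ρ0 (Multiset.map_le_map ?_)
        exact Finset.val_le_iff.mpr
          (fun i hi => Finset.mem_erase.mpr ⟨fun h' => hjS (h' ▸ hi), Finset.mem_univ i⟩)
      have hzero : (ρ0 ::ₘ Multiset.map ρ S.val).sum = 0 := by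
        rw [Multiset.sum_cons]
        have hsumS : (Multiset.map ρ S.val).sum = ∑ i ∈ S, ρ i := rfl
        rw [hsumS, ← hρ0, addself]
      exact subsum_ne_zero hρ' hle Multiset.cons_ne_zero hzero
    have haj : α j ∈ S.image α := Finset.mem_image_of_mem α hjS
    have hli : LinIndep (S.image α) := imageLinIndep hsp hd S
    have hαinj : Function.Injective α := alpha_inj hd
    have hρ0αj : ρ0 (α j) = 1 := by rw [hρ0, sum_apply_alpha hd S j, if_pos hjS]
    have hσ2 : S'.image α' = insert (α j) (shift ((S.image α).erase (α j)) (α j)) := by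
      rw [D1 hsp' hd' S', ← hρ0']
      ext v
      rw [Finset.mem_filter, hmap', Multiset.map_cons, Multiset.count_cons, cnt_eq_card]
      constructor
      · rintro ⟨-, h1, h2⟩
        have hjv : ρ j v = 1 := by rw [hρj]; exact h1
        rcases z2 (ρ0 v) with h0 | h0
        · -- ρ0 v = 0 : card = 1, v = α j + α k
          rw [h0, if_neg (by exact one_ne_zero), add_zero] at h2
          obtain ⟨k, hk⟩ := Finset.card_eq_one.mp h2
          have hkmem : k ∈ (Finset.univ.erase j).filter (fun i => ρ i v = 1) := by
            rw [hk]; exact Finset.mem_singleton_self k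
          have hkj : k ≠ j := (Finset.mem_erase.mp (Finset.mem_filter.mp hkmem).1).1
          have hkv : ρ k v = 1 := (Finset.mem_filter.mp hkmem).2
          have hvz : ∀ i, i ≠ j → i ≠ k → ρ i v = 0 := by
            intro i hij hik
            rcases z2 (ρ i v) with h' | h'
            · exact h'
            · exfalso
              have : i ∈ (Finset.univ.erase j).filter (fun i => ρ i v = 1) :=
                Finset.mem_filter.mpr ⟨Finset.mem_erase.mpr ⟨hij, Finset.mem_univ i⟩, h'⟩
              rw [hk, Finset.mem_singleton] at this
              exact hik this
          have hv : v = α j + α k := by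
            rw [expand hsp hd v]
            have hsub : ∑ i, ρ i v • α i = ∑ i ∈ ({j, k} : Finset (Fin n)), ρ i v • α i := by
              refine (Finset.sum_subset (Finset.subset_univ _) ?_).symm
              intro i _ hi
              simp only [Finset.mem_insert, Finset.mem_singleton, not_or] at hi
              rw [hvz i hi.1 hi.2, zero_smul]
            rw [hsub, Finset.sum_pair (fun h' => hkj h'.symm), hjv, hkv, one_smul, one_smul]
          have hkS : k ∈ S := by
            have : ρ0 v = 1 + (if k ∈ S then 1 else 0) := by
              rw [hv, map_add, hρ0αj, hρ0, sum_apply_alpha hd S k]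
            rw [h0] at this
            by_contra hkS
            rw [if_neg hkS, add_zero] at this
            exact one_ne_zero this.symm
          refine Finset.mem_insert_of_mem ?_
          rw [mem_shift]
          have : v + α j = α k := by
            rw [hv, add_comm (α j) (α k), add_assoc, addself, add_zero]
          rw [this]
          exact Finset.mem_erase.mpr ⟨fun h' => hkj (hαinj h'), Finset.mem_image_of_mem α hkS⟩
        · -- ρ0 v = 1 : card = 0, v = α j
          rw [h0, if_pos rfl] at h2
          have hc0 : ((Finset.univ.erase j).filter (fun i => ρ i v = 1)).card = 0 := by omega
          have hvz : ∀ i, i ≠ j → ρ i v = 0 := by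
            intro i hij
            rcases z2 (ρ i v) with h' | h'
            · exact h'
            · exfalso
              have : i ∈ (Finset.univ.erase j).filter (fun i => ρ i v = 1) :=
                Finset.mem_filter.mpr ⟨Finset.mem_erase.mpr ⟨hij, Finset.mem_univ i⟩, h'⟩
              rw [Finset.card_eq_zero.mp hc0] at this
              exact absurd this (Finset.notMem_empty i)
          have hv : v = α j := by
            rw [expand hsp hd v, Finset.sum_eq_single j]
            · rw [hjv, one_smul]
            · intro i _ hij
              rw [hvz i hij, zero_smul]
            · intro h'; exact absurd (Finset.mem_univ j) h'
          rw [hv]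
          exact Finset.mem_insert_self _ _
      · intro hv
        rcases Finset.mem_insert.mp hv with rfl | hvs
        · refine ⟨Finset.mem_univ _, ?_, ?_⟩
          · rw [← hρj, hd j j, if_pos rfl]
          · have hfe : (Finset.univ.erase j).filter (fun i => ρ i (α j) = 1) = ∅ := by
              rw [Finset.filter_eq_empty_iff]
              intro i hi
              rw [hd i j, if_neg (Finset.mem_erase.mp hi).1]
              exact zero_ne_one
            rw [hfe, Finset.card_empty, hρ0αj, if_pos rfl]
        · rw [mem_shift] at hvs
          obtain ⟨k, hkS, hk⟩ := Finset.mem_image.mp (Finset.mem_of_mem_erase hvs)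
          have hkj : k ≠ j := by
            intro h'
            exact (Finset.mem_erase.mp hvs).1 (by rw [← hk, h'])
          have hv : v = α k + α j := by
            have := congrArg (· + α j) hk
            simpa [add_assoc, addself] using this.symm
          subst hv
          have hval : ∀ i, ρ i (α k + α j) = (if i = k then 1 else 0) + (if i = j then 1 else 0) := by
            intro i
            rw [map_add, hd i k, hd i j]
          refine ⟨Finset.mem_univ _, ?_, ?_⟩
          · rw [← hρj, hval j, if_neg (fun h' => hkj h'.symm), if_pos rfl, zero_add]
          · have hK : (Finset.univ.erase j).filter (fun i => ρ i (α k + α j) = 1) = {k} := by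
              ext i
              rw [Finset.mem_filter, Finset.mem_erase, Finset.mem_singleton, hval i]
              constructor
              · rintro ⟨⟨hij, -⟩, hone⟩
                by_contra hik
                rw [if_neg hik, if_neg hij, add_zero] at hone
                exact zero_ne_one hone
              · rintro rfl
                exact ⟨⟨hkj, Finset.mem_univ _⟩,
                  by rw [if_pos rfl, if_neg hkj, add_zero]⟩
            have hρ0v : ρ0 (α k + α j) = 0 := by
              rw [map_add, hρ0αj, hρ0, sum_apply_alpha hd S k, if_pos hkS]
              exact addself 1
            rw [hK, Finset.card_singleton, hρ0v, if_neg (by exact one_ne_zero)]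
    have hrel : SimpRel (S.image α) (S'.image α') := by
      have heq2 : S'.image α' = (shift (insert 0 (S.image α)) (α j)).erase 0 := by
        rw [hσ2, shiftT_erase hli haj]
      have hmem2 : S'.image α' ∈ Finset.univ.filter (fun σ' => SimpRel (S.image α) σ') := by
        rw [nbhd_eq hli]
        exact Finset.mem_image.mpr ⟨α j, Finset.mem_insert_of_mem haj, heq2.symm⟩
      exact (Finset.mem_filter.mp hmem2).2
    exact pairClass_congr hli hrel

end wd

section faithpres

variable {n : ℕ}

lemma pres_faithful {m : Mon n} {ρ0 : Module.Dual (ZMod 2) (V n)}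
    {ρ : Fin n → Module.Dual (ZMod 2) (V n)} {α : Fin n → V n} {S : Finset (Fin n)}
    (h : Pres m ρ0 ρ α S) : Faithful n m := by
  obtain ⟨hρ, hsp, hd, hSne, hρ0, hm⟩ := h
  refine ⟨?_, ?_, ?_⟩
  · rw [hm, Multiset.card_cons, Multiset.card_map]
    simp
  · intro h0
    rw [hm, Multiset.mem_cons] at h0
    rcases h0 with h0 | h0
    · obtain ⟨j, hj⟩ := hSne
      have h2 : ρ0 (α j) = 0 := by rw [← h0]; rfl
      rw [hρ0, sum_apply_alpha hd S j, if_pos hj] at h2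
      exact one_ne_zero h2
    · obtain ⟨i, _, hi⟩ := Multiset.mem_map.mp h0
      have h2 : ρ i (α i) = 0 := by rw [hi]; rfl
      rw [hd i i, if_pos rfl] at h2
      exact one_ne_zero h2
  · rw [eq_top_iff, ← hsp]
    refine Submodule.span_le.mpr ?_
    rintro f ⟨i, rfl⟩
    refine Submodule.subset_span ?_
    show ρ i ∈ m
    rw [hm]
    exact Multiset.mem_cons_of_mem (Multiset.mem_map.mpr ⟨i, Finset.mem_univ_val i, rfl⟩)

lemma faithful_pres {m : Mon n} (h : Faithful n m) :
    ∃ ρ0 ρ α S, Pres m ρ0 ρ α S := by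
  obtain ⟨hcard, h0m, hsp⟩ := h
  obtain ⟨b, hbsub, hbspan, hbli⟩ := exists_linearIndependent (ZMod 2) {f | f ∈ m}
  have hfin : b.Finite := Set.Finite.subset (Set.Finite.ofFinset m.toFinset
    (fun x => by simp [Multiset.mem_toFinset])) hbsub
  haveI := hfin.fintype
  have hble : ⊤ ≤ Submodule.span (ZMod 2) (Set.range (fun x : b => (x : Module.Dual (ZMod 2) (V n)))) := by
    rw [Subtype.range_coe, hbspan, hsp]
  let B : Module.Basis b (ZMod 2) (Module.Dual (ZMod 2) (V n)) := Module.Basis.mk hbli hble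
  have hcardb : Fintype.card b = n := by
    rw [← Module.finrank_eq_card_basis B, Subspace.dual_finrank_eq, Module.finrank_fin_fun]
  let e : b ≃ Fin n := Fintype.equivFinOfCardEq hcardb
  let B' : Module.Basis (Fin n) (ZMod 2) (Module.Dual (ZMod 2) (V n)) := B.reindex e
  set ρ : Fin n → Module.Dual (ZMod 2) (V n) := ⇑B' with hρdef
  have hρli : LinearIndependent (ZMod 2) ρ := B'.linearIndependent
  have hρsp : Submodule.span (ZMod 2) (Set.range ρ) = ⊤ := B'.span_eq
  set α : Fin n → V n :=
    fun i => (Module.evalEquiv (ZMod 2) (V n)).symm (B'.dualBasis i) with hαdef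
  have hd : ∀ i j, ρ i (α j) = if i = j then 1 else 0 := by
    intro i j
    have h1 : ρ i (α j) = (Module.Dual.eval (ZMod 2) (V n) (α j)) (ρ i) := by
      rw [Module.Dual.eval_apply]
    rw [h1, ← Module.evalEquiv_toLinearMap]
    show ((Module.evalEquiv (ZMod 2) (V n))
      ((Module.evalEquiv (ZMod 2) (V n)).symm (B'.dualBasis j))) (ρ i) = _
    rw [LinearEquiv.apply_symm_apply]
    rw [B'.dualBasis_apply_self j i]
  -- the multiset of basis vectors
  have hρinj : Function.Injective ρ := B'.injective
  set N : Mon n := Multiset.map ρ Finset.univ.val with hN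
  have hNnodup : N.Nodup := Finset.univ.nodup.map hρinj
  have hNmem : ∀ x ∈ N, x ∈ m := by
    intro x hx
    obtain ⟨i, _, rfl⟩ := Multiset.mem_map.mp hx
    have : ρ i ∈ b := by
      show B' i ∈ b
      rw [Module.Basis.reindex_apply]
      have : B (e.symm i) = ((e.symm i : b) : Module.Dual (ZMod 2) (V n)) := by
        rw [Module.Basis.mk_apply]
      rw [this]
      exact (e.symm i).2
    exact hbsub this
  have hNle : N ≤ m := by
    rw [Multiset.le_iff_count]
    intro x
    by_cases hx : x ∈ N
    · have h1 : Multiset.count x N ≤ 1 := (Multiset.nodup_iff_count_le_one.mp hNnodup) x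
      have h2 : 1 ≤ Multiset.count x m := Multiset.count_pos.mpr (hNmem x hx)
      omega
    · rw [Multiset.count_eq_zero_of_notMem hx]
      omega
  have hcardN : Multiset.card N = n := by
    rw [hN, Multiset.card_map]
    simp
  have hr : Multiset.card (m - N) = 1 := by
    rw [Multiset.card_sub hNle, hcard, hcardN]
    omega
  obtain ⟨ρ0, hρ0r⟩ := Multiset.card_eq_one.mp hr
  have hm : m = ρ0 ::ₘ N := by
    have := tsub_add_cancel_of_le hNle
    rw [hρ0r] at this
    rw [← this, Multiset.singleton_add]
  set S : Finset (Fin n) := Finset.univ.filter (fun i => ρ0 (α i) = 1) with hS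
  have hρ0S : ρ0 = ∑ i ∈ S, ρ i := by
    refine dual_ext' hρsp hd (fun j => ?_)
    rw [sum_apply_alpha hd S j]
    by_cases hj : j ∈ S
    · rw [if_pos hj]
      exact (Finset.mem_filter.mp hj).2
    · rw [if_neg hj]
      rcases z2 (ρ0 (α j)) with h' | h'
      · exact h'
      · exact absurd (Finset.mem_filter.mpr ⟨Finset.mem_univ j, h'⟩) hj
  have hSne : S.Nonempty := by
    rw [Finset.nonempty_iff_ne_empty]
    intro hemp
    have : ρ0 = 0 := by
      rw [hρ0S, hemp, Finset.sum_empty]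
    apply h0m
    rw [← this, hm]
    exact Multiset.mem_cons_self ρ0 N
  exact ⟨ρ0, ρ, α, S, hρli, hρsp, hd, hSne, hρ0S, hm⟩

lemma build {s σ : Finset (V n)} (hli : LinIndep s) (hcard : s.card = n)
    (hsub : σ ⊆ s) (hne : σ.Nonempty) :
    ∃ m ρ0 ρ α S, Pres m ρ0 ρ α S ∧ S.image α = σ ∧ Sᶜ.image α = s \ σ := by
  let e : { x // x ∈ s } ≃ Fin n := (s.equivFin).trans (finCongr hcard)
  set α : Fin n → V n := fun i => ((e.symm i : { x // x ∈ s }) : V n) with hα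
  have hαli : LinearIndependent (ZMod 2) α := by
    have := hli.comp e.symm (e.symm.injective)
    exact this
  have hαs : ∀ i, α i ∈ s := fun i => (e.symm i).2
  have hαsurj : ∀ x ∈ s, ∃ i, α i = x := by
    intro x hx
    refine ⟨e ⟨x, hx⟩, ?_⟩
    rw [hα]
    simp
  have hαinj : Function.Injective α := by
    intro i j hij
    have := Subtype.coe_injective (a₁ := e.symm i) (a₂ := e.symm j) hij
    exact e.symm.injective this
  have hnpos : 0 < n := by
    obtain ⟨x, hx⟩ := hne
    have := Finset.card_pos.mpr ⟨x, hsub hx⟩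
    omega
  haveI : Nonempty (Fin n) := ⟨⟨0, hnpos⟩⟩
  let B : Module.Basis (Fin n) (ZMod 2) (V n) := basisOfLinearIndependentOfCardEqFinrank hαli
    (by rw [Fintype.card_fin, Module.finrank_fin_fun])
  have hBα : ⇑B = α := coe_basisOfLinearIndependentOfCardEqFinrank hαli _
  set ρ : Fin n → Module.Dual (ZMod 2) (V n) := B.coord with hρ
  have hρli : LinearIndependent (ZMod 2) ρ := by
    rw [hρ, ← Module.Basis.coe_dualBasis]
    exact B.dualBasis.linearIndependent
  have hρsp : Submodule.span (ZMod 2) (Set.range ρ) = ⊤ := by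
    rw [hρ, ← Module.Basis.coe_dualBasis]
    exact B.dualBasis.span_eq
  have hd : ∀ i j, ρ i (α j) = if i = j then 1 else 0 := by
    intro i j
    rw [hρ, ← hBα]
    rw [Module.Basis.coord_apply, Module.Basis.repr_self, Finsupp.single_apply]
    by_cases hij : i = j <;> simp [hij, eq_comm]
  set S : Finset (Fin n) := Finset.univ.filter (fun i => α i ∈ σ) with hS
  have hSim : S.image α = σ := by
    ext x
    constructor
    · intro hx
      obtain ⟨i, hi, rfl⟩ := Finset.mem_image.mp hx
      exact (Finset.mem_filter.mp hi).2
    · intro hx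
      obtain ⟨i, rfl⟩ := hαsurj x (hsub hx)
      exact Finset.mem_image_of_mem α (Finset.mem_filter.mpr ⟨Finset.mem_univ i, hx⟩)
  have hScim : Sᶜ.image α = s \ σ := by
    ext x
    constructor
    · intro hx
      obtain ⟨i, hi, rfl⟩ := Finset.mem_image.mp hx
      have : α i ∉ σ := by
        intro h'
        exact (Finset.mem_compl.mp hi) (Finset.mem_filter.mpr ⟨Finset.mem_univ i, h'⟩)
      exact Finset.mem_sdiff.mpr ⟨hαs i, this⟩
    · intro hx
      obtain ⟨hxs, hxσ⟩ := Finset.mem_sdiff.mp hx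
      obtain ⟨i, rfl⟩ := hαsurj x hxs
      refine Finset.mem_image_of_mem α (Finset.mem_compl.mpr ?_)
      intro h'
      exact hxσ (Finset.mem_filter.mp h').2
  have hSne : S.Nonempty := by
    obtain ⟨x, hx⟩ := hne
    obtain ⟨i, rfl⟩ := hαsurj x (hsub hx)
    exact ⟨i, Finset.mem_filter.mpr ⟨Finset.mem_univ i, hx⟩⟩
  exact ⟨(∑ i ∈ S, ρ i) ::ₘ Multiset.map ρ Finset.univ.val, ∑ i ∈ S, ρ i, ρ, α, S,
    ⟨hρli, hρsp, hd, hSne, rfl, rfl⟩, hSim, hScim⟩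

end faithpres

section shiftrecon

variable {n : ℕ}

theorem shiftPres {m : Mon n} {ρ0 : Module.Dual (ZMod 2) (V n)}
    {ρ : Fin n → Module.Dual (ZMod 2) (V n)} {α : Fin n → V n} {S : Finset (Fin n)}
    {σ'' : Finset (V n)} (h : Pres m ρ0 ρ α S) (hrel : SimpRel (S.image α) σ'') :
    ∃ ρ0' ρ' α' S', Pres m ρ0' ρ' α' S' ∧ S'.image α' = σ'' ∧ S'ᶜ.image α' = Sᶜ.image α := by
  obtain ⟨hρ, hsp, hd, hSne, hρ0, hm⟩ := h
  have hαinj : Function.Injective α := alpha_inj hd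
  rcases hrel with rfl | ⟨a, hinter, hshift⟩
  · exact ⟨ρ0, ρ, α, S, ⟨hρ, hsp, hd, hSne, hρ0, hm⟩, rfl, rfl⟩
  have haσ : a ∈ S.image α := (Finset.mem_inter.mp (hinter ▸ Finset.mem_singleton_self a)).1
  have haσ'' : a ∈ σ'' := (Finset.mem_inter.mp (hinter ▸ Finset.mem_singleton_self a)).2
  obtain ⟨j, hjS, hja⟩ := Finset.mem_image.mp haσ
  have hσ''eq : σ'' = insert a (shift ((S.image α).erase a) a) := by
    rw [Finset.sdiff_singleton_eq_erase, Finset.sdiff_singleton_eq_erase] at hshift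
    rw [hshift]
    exact (Finset.insert_erase haσ'').symm
  have hρ0α : ∀ l, ρ0 (α l) = if l ∈ S then 1 else 0 := by
    intro l
    rw [hρ0, sum_apply_alpha hd S l]
  set ρ' : Fin n → Module.Dual (ZMod 2) (V n) := fun k => if k = j then ρ0 else ρ k with hρ'def
  set α' : Fin n → V n :=
    fun k => if k = j then α j else if k ∈ S then α k + α j else α k with hα'def
  have hρ'j : ρ' j = ρ0 := by
    show (if j = j then ρ0 else ρ j) = ρ0
    rw [if_pos rfl]
  have hρ'k : ∀ k, k ≠ j → ρ' k = ρ k := by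
    intro k hk
    show (if k = j then ρ0 else ρ k) = ρ k
    rw [if_neg hk]
  have hα'j : α' j = α j := by
    show (if j = j then α j else if j ∈ S then α j + α j else α j) = α j
    rw [if_pos rfl]
  have hα'S : ∀ l, l ≠ j → l ∈ S → α' l = α l + α j := by
    intro l h1 h2
    show (if l = j then α j else if l ∈ S then α l + α j else α l) = _
    rw [if_neg h1, if_pos h2]
  have hα'n : ∀ l, l ≠ j → l ∉ S → α' l = α l := by
    intro l h1 h2
    show (if l = j then α j else if l ∈ S then α l + α j else α l) = _
    rw [if_neg h1, if_neg h2]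
  have hd' : ∀ k l, ρ' k (α' l) = if k = l then 1 else 0 := by
    intro k l
    by_cases hkj : k = j
    · by_cases hlj : l = j
      · rw [hkj, hlj, hρ'j, hα'j, hρ0α, if_pos hjS, if_pos rfl]
      · have hkl : k ≠ l := fun h' => hlj (h'.symm.trans hkj)
        by_cases hlS : l ∈ S
        · rw [hkj, hρ'j, hα'S l hlj hlS, map_add, hρ0α, hρ0α, if_pos hlS, if_pos hjS,
            if_neg (fun h' => hlj h'.symm)]
          exact addself 1
        · rw [hkj, hρ'j, hα'n l hlj hlS, hρ0α, if_neg hlS, if_neg (fun h' => hlj h'.symm)]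
    · by_cases hlj : l = j
      · rw [hlj, hρ'k k hkj, hα'j, hd k j, if_neg hkj]
      · by_cases hlS : l ∈ S
        · rw [hρ'k k hkj, hα'S l hlj hlS, map_add, hd k l, hd k j, if_neg hkj, add_zero]
        · rw [hρ'k k hkj, hα'n l hlj hlS, hd k l]
  have hρjF : ρ j = ρ' j + ∑ i ∈ S.erase j, ρ' i := by
    have h1 : ∑ i ∈ S.erase j, ρ' i = ∑ i ∈ S.erase j, ρ i :=
      Finset.sum_congr rfl (fun i hi => hρ'k i (Finset.mem_erase.mp hi).1)
    have h2 : ρ0 = ρ j + ∑ i ∈ S.erase j, ρ i := by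
      rw [hρ0, ← Finset.add_sum_erase S ρ hjS]
    have h3 : ρ j = ρ0 + ∑ i ∈ S.erase j, ρ i := add_right_cancel2 h2
    rw [h1, h3, hρ'j]
  have hsp' : Submodule.span (ZMod 2) (Set.range ρ') = ⊤ := by
    rw [eq_top_iff, ← hsp]
    refine Submodule.span_le.mpr ?_
    rintro f ⟨k, rfl⟩
    by_cases hkj : k = j
    · rw [hkj, hρjF]
      refine Submodule.add_mem _ (Submodule.subset_span ⟨j, rfl⟩) ?_
      exact Submodule.sum_mem _ (fun i _ => Submodule.subset_span ⟨i, rfl⟩)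
    · rw [← hρ'k k hkj]
      exact Submodule.subset_span ⟨k, rfl⟩
  have hρ'li : LinearIndependent (ZMod 2) ρ' :=
    linearIndependent_of_top_le_span_of_card_eq_finrank (hsp'.ge)
      (by rw [Fintype.card_fin, Subspace.dual_finrank_eq, Module.finrank_fin_fun])
  have hρ0'' : ρ j = ∑ i ∈ S, ρ' i := by
    rw [← Finset.add_sum_erase S ρ' hjS, ← hρjF]
  have hjF : j ∈ Finset.univ.val := Finset.mem_univ_val j
  have hFsplit : (Finset.univ.val : Multiset (Fin n)) = j ::ₘ Finset.univ.val.erase j :=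
    (Multiset.cons_erase hjF).symm
  have hmapcongr : Multiset.map ρ' (Finset.univ.val.erase j)
      = Multiset.map ρ (Finset.univ.val.erase j) := by
    refine Multiset.map_congr rfl (fun k hk => ?_)
    have hkj : k ≠ j := by
      intro h'
      subst h'
      exact Finset.univ.nodup.notMem_erase hk
    exact hρ'k k hkj
  have hm'' : m = ρ j ::ₘ Multiset.map ρ' Finset.univ.val := by
    have hmapF : Multiset.map ρ' Finset.univ.val
        = ρ0 ::ₘ Multiset.map ρ (Finset.univ.val.erase j) := by
      conv_lhs => rw [hFsplit]
      rw [Multiset.map_cons, hmapcongr, hρ'j]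
    rw [hmapF, Multiset.cons_swap, hm]
    congr 1
    conv_lhs => rw [hFsplit]
    rw [Multiset.map_cons]
  have him1 : S.image α' = σ'' := by
    have hs1 : S = insert j (S.erase j) := (Finset.insert_erase hjS).symm
    conv_lhs => rw [hs1]
    rw [Finset.image_insert]
    have him : (S.erase j).image α' = shift ((S.image α).erase (α j)) (α j) := by
      have h1 : (S.erase j).image α' = (S.erase j).image (fun k => α k + α j) := by
        refine Finset.image_congr (fun k hk => ?_)
        have hk' := Finset.mem_coe.mp hk
        exact hα'S k (Finset.mem_erase.mp hk').1 (Finset.mem_erase.mp hk').2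
      rw [h1, shift, ← Finset.image_erase hαinj, Finset.image_image]
      rfl
    rw [hα'j, him, hja, hσ''eq]
  have him2 : Sᶜ.image α' = Sᶜ.image α := by
    refine Finset.image_congr (fun k hk => ?_)
    have hk' := Finset.mem_coe.mp hk
    have hkS : k ∉ S := Finset.mem_compl.mp hk'
    have hkj : k ≠ j := fun h' => hkS (h' ▸ hjS)
    exact hα'n k hkj hkS
  exact ⟨ρ j, ρ', α', S, ⟨hρ'li, hsp', hd', hSne, hρ0'', hm''⟩, him1, him2⟩

theorem recon {m m' : Mon n} {ρ0 ρ0' : Module.Dual (ZMod 2) (V n)}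
    {ρ ρ' : Fin n → Module.Dual (ZMod 2) (V n)} {α α' : Fin n → V n}
    {S S' : Finset (Fin n)} (h1 : Pres m ρ0 ρ α S) (h2 : Pres m' ρ0' ρ' α' S')
    (hσ : S.image α = S'.image α') (hτ : Sᶜ.image α = S'ᶜ.image α') : m = m' := by
  obtain ⟨hρ, hsp, hd, hSne, hρ0, hm⟩ := h1
  obtain ⟨hρ', hsp', hd', hSne', hρ0', hm'⟩ := h2
  have hαinj : Function.Injective α := alpha_inj hd
  have hα'inj : Function.Injective α' := alpha_inj hd'
  have huniv : Finset.univ.image α = Finset.univ.image α' := by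
    have e1 : Finset.univ.image α = S.image α ∪ Sᶜ.image α := by
      rw [← Finset.image_union, Finset.union_compl]
    have e2 : Finset.univ.image α' = S'.image α' ∪ S'ᶜ.image α' := by
      rw [← Finset.image_union, Finset.union_compl]
    rw [e1, e2, hσ, hτ]
  have hg : ∀ k, ∃ i, α i = α' k := by
    intro k
    have : α' k ∈ Finset.univ.image α := by
      rw [huniv]
      exact Finset.mem_image_of_mem α' (Finset.mem_univ k)
    obtain ⟨i, _, hi⟩ := Finset.mem_image.mp this
    exact ⟨i, hi⟩
  choose g hgspec using hg
  have hginj : Function.Injective g := by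
    intro k l h'
    apply hα'inj
    rw [← hgspec k, ← hgspec l, h']
  have hρ'g : ∀ k, ρ' k = ρ (g k) := by
    intro k
    refine dual_ext' hsp' hd' (fun l => ?_)
    rw [hd' k l, ← hgspec l, hd (g k) (g l)]
    rcases eq_or_ne k l with rfl | hkl
    · rw [if_pos rfl, if_pos rfl]
    · rw [if_neg hkl, if_neg (fun h' => hkl (hginj h'))]
  have hgS : ∀ k, k ∈ S' → g k ∈ S := by
    intro k hk
    have : α' k ∈ S.image α := by
      rw [hσ]
      exact Finset.mem_image_of_mem α' hk
    obtain ⟨i, hiS, hi⟩ := Finset.mem_image.mp this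
    have : g k = i := hαinj (by rw [hgspec k, ← hi])
    rwa [this]
  have hcardS : S'.card = S.card := by
    have e1 : (S.image α).card = S.card := Finset.card_image_of_injective S hαinj
    have e2 : (S'.image α').card = S'.card := Finset.card_image_of_injective S' hα'inj
    rw [← e1, ← e2, hσ]
  have hgSim : S'.image g = S := by
    refine Finset.eq_of_subset_of_card_le ?_ ?_
    · intro x hx
      obtain ⟨k, hk, rfl⟩ := Finset.mem_image.mp hx
      exact hgS k hk
    · rw [Finset.card_image_of_injective S' hginj, hcardS]
  have hρ0eq : ρ0 = ρ0' := by
    rw [hρ0', Finset.sum_congr rfl (fun k _ => hρ'g k)]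
    rw [← Finset.sum_image (fun a _ b _ h' => hginj h'), hgSim, ← hρ0]
  have hgsurj : Function.Surjective g := Finite.injective_iff_surjective.mp hginj
  have hmapg : Multiset.map g Finset.univ.val = Finset.univ.val := by
    refine (Multiset.Nodup.ext (Finset.univ.nodup.map hginj) Finset.univ.nodup).mpr ?_
    intro x
    constructor
    · intro _; exact Finset.mem_univ_val x
    · intro _
      obtain ⟨k, hk⟩ := hgsurj x
      exact Multiset.mem_map.mpr ⟨k, Finset.mem_univ_val k, hk⟩
  have hmap : Multiset.map ρ' Finset.univ.val = Multiset.map ρ Finset.univ.val := by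
    rw [Multiset.map_congr rfl (fun k _ => hρ'g k)]
    show Multiset.map (ρ ∘ g) Finset.univ.val = _
    rw [← Multiset.map_map, hmapg]
  rw [hm, hm', hρ0eq, hmap]

end shiftrecon

section assemble

variable {n : ℕ}

def PresEx (n : ℕ) (m : Mon n) : Prop := ∃ ρ0 ρ α S, Pres m ρ0 ρ α S

noncomputable def Dm (n : ℕ) (m : Mon n) : (Finset (V n) × Finset (V n)) →₀ ZMod 2 :=
  if h : PresEx n m then
    pairClass ((h.choose_spec.choose_spec.choose_spec.choose).image
        h.choose_spec.choose_spec.choose)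
      (((h.choose_spec.choose_spec.choose_spec.choose)ᶜ).image
        h.choose_spec.choose_spec.choose)
  else 0

lemma Dm_eq {m : Mon n} {ρ0 : Module.Dual (ZMod 2) (V n)}
    {ρ : Fin n → Module.Dual (ZMod 2) (V n)} {α : Fin n → V n} {S : Finset (Fin n)}
    (h : Pres m ρ0 ρ α S) : Dm n m = pairClass (S.image α) (Sᶜ.image α) := by
  have hex : PresEx n m := ⟨ρ0, ρ, α, S, h⟩
  rw [Dm, dif_pos hex]
  exact WD hex.choose_spec.choose_spec.choose_spec.choose_spec h

noncomputable def Lmap (n : ℕ) :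
    (Mon n →₀ ZMod 2) →ₗ[ZMod 2] ((Finset (V n) × Finset (V n)) →₀ ZMod 2) :=
  Finsupp.lsum (ZMod 2) (fun m => LinearMap.toSpanSingleton (ZMod 2) _ (Dm n m))

lemma Lmap_single (m : Mon n) : Lmap n (Finsupp.single m 1) = Dm n m := by
  rw [Lmap, Finsupp.lsum_single]
  exact one_smul _ _

lemma pairClass_apply (σ τ σ0 τ0 : Finset (V n)) :
    (pairClass σ τ) (σ0, τ0) = if SimpRel σ σ0 ∧ τ = τ0 then 1 else 0 := by
  rw [pairClass, Finsupp.finset_sum_apply]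
  have h1 : ∀ σ' ∈ Finset.univ.filter (fun σ' => SimpRel σ σ'),
      (Finsupp.single ((σ', τ)) (1 : ZMod 2)) (σ0, τ0)
        = if (σ', τ) = (σ0, τ0) then 1 else 0 := fun σ' _ => Finsupp.single_apply
  rw [Finset.sum_congr rfl h1]
  by_cases hτ : τ = τ0
  · have h2 : ∀ σ' ∈ Finset.univ.filter (fun σ' => SimpRel σ σ'),
        (if ((σ', τ) = (σ0, τ0)) then (1 : ZMod 2) else 0)
          = if σ' = σ0 then 1 else 0 := by
      intro σ' _
      rcases eq_or_ne σ' σ0 with rfl | hne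
      · rw [if_pos rfl, if_pos (by rw [hτ])]
      · rw [if_neg hne, if_neg (fun h' => hne (congrArg Prod.fst h'))]
    rw [Finset.sum_congr rfl h2, Finset.sum_ite_eq' _ σ0 (fun _ => 1)]
    by_cases hrel : SimpRel σ σ0
    · rw [if_pos (Finset.mem_filter.mpr ⟨Finset.mem_univ _, hrel⟩), if_pos ⟨hrel, hτ⟩]
    · rw [if_neg (fun h' => hrel (Finset.mem_filter.mp h').2),
        if_neg (fun h' => hrel h'.1)]
  · rw [Finset.sum_congr rfl (fun σ' _ => if_neg
      (fun h' => hτ (congrArg Prod.snd h')))]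
    rw [Finset.sum_const_zero, if_neg (fun h' => hτ h'.2)]

end assemble

/-- the map `D`, sending a faithful representation
`τ = ρ_0 ρ_1 ⋯ ρ_n` (with `{ρ_1,...,ρ_n}` a basis, `ρ_0 = ∑_{i ∈ S} ρ_i` and dual basis
`α`) to `[α_1,...,α_{p+1}] ⊗ {α_{p+2},...,α_n}`, extends to a linear map inducing an
`F_2`-linear isomorphism of `F̄_{n+1}` onto `𝔅_{n-2}`. -/
theorem stmt10 (n : ℕ) :
    ∃ L : (Mon n →₀ ZMod 2) →ₗ[ZMod 2] ((Finset (V n) × Finset (V n)) →₀ ZMod 2),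
      (∀ (ρ0 : Module.Dual (ZMod 2) (V n)) (ρ : Fin n → Module.Dual (ZMod 2) (V n))
          (α : Fin n → V n) (S : Finset (Fin n)),
        LinearIndependent (ZMod 2) ρ →
        Submodule.span (ZMod 2) (Set.range ρ) = ⊤ →
        (∀ i j, ρ i (α j) = if i = j then 1 else 0) →
        S.Nonempty →
        ρ0 = ∑ i ∈ S, ρ i →
        L (Finsupp.single (ρ0 ::ₘ Multiset.map ρ Finset.univ.val) 1)
          = pairClass (S.image α) (Sᶜ.image α)) ∧
      Submodule.map L (FSpan n) = BSpan n ∧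
      Set.InjOn L (FSpan n : Set (Mon n →₀ ZMod 2)) := by
  refine ⟨Lmap n, ?_, ?_, ?_⟩
  · intro ρ0 ρ α S h1 h2 h3 h4 h5
    have hp : Pres (ρ0 ::ₘ Multiset.map ρ Finset.univ.val) ρ0 ρ α S :=
      ⟨h1, h2, h3, h4, h5, rfl⟩
    rw [Lmap_single, Dm_eq hp]
  · rw [FSpan, Submodule.map_span]
    have himg : (Lmap n) '' {x : Mon n →₀ ZMod 2 | ∃ m : Mon n, Faithful n m ∧
        x = Finsupp.single m 1}
        = {y | ∃ s σ : Finset (V n), LinIndep s ∧ s.card = n ∧ σ ⊆ s ∧ σ.Nonempty ∧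
            y = pairClass σ (s \ σ)} := by
      ext y
      constructor
      · rintro ⟨x, ⟨m, hf, rfl⟩, rfl⟩
        obtain ⟨ρ0, ρ, α, S, hp⟩ := faithful_pres hf
        have hd := hp.2.2.1
        have hsp := hp.2.1
        have hαinj : Function.Injective α := alpha_inj hd
        refine ⟨Finset.univ.image α, S.image α, imageLinIndep hsp hd Finset.univ, ?_, ?_, ?_, ?_⟩
        · rw [Finset.card_image_of_injective _ hαinj, Finset.card_univ, Fintype.card_fin]
        · exact Finset.image_subset_image (Finset.subset_univ S)
        · exact hp.2.2.2.1.image α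
        · rw [Lmap_single, Dm_eq hp]
          congr 1
          rw [Finset.compl_eq_univ_sdiff, Finset.image_sdiff _ _ hαinj]
      · rintro ⟨s, σ, hli, hcard, hsub, hne, rfl⟩
        obtain ⟨m, ρ0, ρ, α, S, hp, hσ, hτ⟩ := build hli hcard hsub hne
        refine ⟨Finsupp.single m 1, ⟨m, pres_faithful hp, rfl⟩, ?_⟩
        rw [Lmap_single, Dm_eq hp, hσ, hτ]
    rw [himg, BSpan]
  · have hker : ∀ x ∈ FSpan n, Lmap n x = 0 → x = 0 := by
      intro x hx hLx
      by_contra hxne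
      have hsupp : ∀ m ∈ x.support, Faithful n m := by
        have hle : FSpan n ≤ Finsupp.supported (ZMod 2) (ZMod 2) {m | Faithful n m} := by
          rw [FSpan]
          refine Submodule.span_le.mpr ?_
          rintro y ⟨m, hf, rfl⟩
          have hmem : (Finsupp.single m 1 : Mon n →₀ ZMod 2)
              ∈ Finsupp.supported (ZMod 2) (ZMod 2) {m | Faithful n m} := by
            rw [Finsupp.mem_supported]
            intro a ha
            have := Finsupp.support_single_subset (Finset.mem_coe.mp ha)
            rw [Finset.mem_singleton] at this
            exact this ▸ hf
          exact hmem
        have hx' := hle hx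
        rw [Finsupp.mem_supported] at hx'
        intro m hm
        exact hx' hm
      obtain ⟨m0, hm0⟩ := Finsupp.support_nonempty_iff.mpr hxne
      obtain ⟨ρ0, ρ, α, S, hp0⟩ := faithful_pres (hsupp m0 hm0)
      have hLx0 : (Lmap n x) (S.image α, Sᶜ.image α) = 1 := by
        rw [Lmap, Finsupp.lsum_apply, Finsupp.sum, Finsupp.finset_sum_apply]
        have hterm : ∀ m ∈ x.support,
            ((LinearMap.toSpanSingleton (ZMod 2) _ (Dm n m)) (x m)) (S.image α, Sᶜ.image α)
              = if m = m0 then 1 else 0 := by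
          intro m hm
          have hx1 : x m = 1 := z2' (Finsupp.mem_support_iff.mp hm)
          rw [LinearMap.toSpanSingleton_apply, hx1, one_smul]
          obtain ⟨q0, qρ, qα, qS, hq⟩ := faithful_pres (hsupp m hm)
          rcases eq_or_ne m m0 with rfl | hne
          · rw [Dm_eq hq, WD hq hp0, pairClass_apply, if_pos ⟨Or.inl rfl, rfl⟩, if_pos rfl]
          · rw [Dm_eq hq, pairClass_apply, if_neg ?_, if_neg hne]
            rintro ⟨hrel, hτm⟩
            obtain ⟨r0, rρ, rα, rS, hr, him1, him2⟩ := shiftPres hq hrel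
            exact hne (recon hr hp0 him1 (by rw [him2, hτm]))
        rw [Finset.sum_congr rfl hterm, Finset.sum_ite_eq' _ m0 (fun _ => 1), if_pos hm0]
      rw [hLx, Finsupp.zero_apply] at hLx0
      exact zero_ne_one hLx0
    intro x hx y hy hxy
    have hsubm : x - y ∈ FSpan n := Submodule.sub_mem _ hx hy
    have h0 : Lmap n (x - y) = 0 := by rw [map_sub, hxy, sub_self]
    exact sub_eq_zero.mp (hker _ hsubm h0)
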